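/- Let B_I be a model of annotated revision program P and B_R a P-justified revision of B_I. Then B_R ≤ₖ B_I. -/
import Mathlib


namespace ARP

variable (U T : Type*)

/-- Revision atoms: `(true, a)` is `in(a)`, `(false, a)` is `out(a)`. -/
abbrev RevAtom := Bool × U
/-- Annotated revision atoms `(l : α)`. -/
abbrev AnnAtom := (RevAtom U) × T
/-- An annotated revision rule: a head and a list of body atoms. -/
abbrev Rule := AnnAtom U T × List (AnnAtom U T)
/-- An annotated revision program: a set of rules. -/
abbrev Program := Set (Rule U T)
/-- T-valuations of revision atoms. -/
abbrev TVal := RevAtom U → T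
/-- T²-valuations of atoms, with the pointwise (knowledge) ordering. -/
abbrev Val := U → T × T

variable {U T} [CompleteDistribLattice T]

/-- A T-valuation satisfies `(l : α)` iff `v l ≥ α`. -/
def satA (v : TVal U T) (q : AnnAtom U T) : Prop := q.2 ≤ v q.1

/-- The bijection θ⁻¹ from T²-valuations to T-valuations. -/
def thetaInv (B : Val U T) : TVal U T := fun l => if l.1 then (B l.2).1 else (B l.2).2

/-- The van Emden-Kowalski style operator on T-valuations. -/
def TP (P : Program U T) (v : TVal U T) : TVal U T :=
  fun l => sSup {α | ∃ r ∈ P, r.1 = (l, α) ∧ ∀ q ∈ r.2, satA v q}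

/-- The operator `T_P^b = θ ∘ T_P ∘ θ⁻¹` on T²-valuations. -/
def TPb (P : Program U T) (B : Val U T) : Val U T :=
  fun a => (TP P (thetaInv B) (true, a), TP P (thetaInv B) (false, a))

/-- Conflation on T², relative to a De Morgan complement `c` on T. -/
def conf (c : T → T) (p : T × T) : T × T := (c p.2, c p.1)

/-- Conflation extended pointwise to T²-valuations. -/
def confV (c : T → T) (B : Val U T) : Val U T := fun a => conf c (B a)

/-- `B` is a model of `P`: it satisfies every rule of `P`. -/
def isModel (P : Program U T) (B : Val U T) : Prop :=
  ∀ r ∈ P, (∀ q ∈ r.2, satA (thetaInv B) q) → satA (thetaInv B) r.1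

/-- `B` is an s-model of `P`. -/
def isSModel (c : T → T) (P : Program U T) (B : Val U T) : Prop :=
  TPb P B ≤ B ∧ B ≤ TPb P B ⊔ confV c (TPb P B)

/-- The relative pseudocomplement: the least `γ` with `α ⊔ γ ≥ β`. -/
def pcomp (α β : T) : T := sInf {γ | β ≤ α ⊔ γ}

/-- The reduct `P_{B_R}|B_I`. -/
def reduct (P : Program U T) (BR BI : Val U T) : Program U T :=
  { r' | ∃ r ∈ P, (∀ q ∈ r.2, satA (thetaInv BR) q) ∧
      r' = (r.1, r.2.map (fun q => (q.1, pcomp (thetaInv BI q.1) q.2))) }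

/-- The necessary change: the least (pre)fixpoint of `T_P^b`. -/
def NC (P : Program U T) : Val U T := sInf {B | TPb P B ≤ B}

/-- A T²-valuation is consistent if `B ≤ₖ -B`. -/
def consistentVal (c : T → T) (B : Val U T) : Prop := B ≤ confV c B

/-- `B_R` is a `P`-justified revision of `B_I`. -/
def JRev (c : T → T) (P : Program U T) (BI BR : Val U T) : Prop :=
  BR = (BI ⊓ confV c (NC (reduct P BR BI))) ⊔ NC (reduct P BR BI)

end ARP

lemma le_sup_pcomp {T : Type*} [CompleteDistribLattice T] (α β : T) :
    β ≤ α ⊔ ARP.pcomp α β := by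
  rw [ARP.pcomp, sup_sInf_eq]
  exact le_iInf₂ fun γ hγ => hγ

lemma tpb_reduct_le {U T : Type*} [CompleteDistribLattice T]
    (P : ARP.Program U T) (BI BR : ARP.Val U T) (hmod : ARP.isModel P BI) :
    ARP.TPb (ARP.reduct P BR BI) BI ≤ BI := by
  have key : ∀ l : ARP.RevAtom U,
      ARP.TP (ARP.reduct P BR BI) (ARP.thetaInv BI) l ≤ ARP.thetaInv BI l := by
    intro l
    apply sSup_le
    rintro α ⟨r', hr', hhead, hbody⟩
    obtain ⟨r, hrP, hsatBR, rfl⟩ := hr'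
    simp only at hhead
    have hhead1 : r.1 = (l, α) := hhead
    have hbodyBI : ∀ q ∈ r.2, ARP.satA (ARP.thetaInv BI) q := by
      intro q hq
      have := hbody (q.1, ARP.pcomp (ARP.thetaInv BI q.1) q.2)
        (List.mem_map.mpr ⟨q, hq, rfl⟩)
      unfold ARP.satA at this ⊢
      calc q.2 ≤ ARP.thetaInv BI q.1 ⊔ ARP.pcomp (ARP.thetaInv BI q.1) q.2 :=
            le_sup_pcomp _ _
        _ ≤ ARP.thetaInv BI q.1 ⊔ ARP.thetaInv BI q.1 := sup_le_sup_left this _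
        _ = ARP.thetaInv BI q.1 := sup_idem _
    have := hmod r hrP hbodyBI
    rw [hhead1] at this
    exact this
  intro a
  exact ⟨key (true, a), key (false, a)⟩

theorem jrev_le_model {U T : Type*} [CompleteDistribLattice T]
    (c : T → T)
    (hinv : ∀ a, c (c a) = a)
    (hdm1 : ∀ a b : T, c (a ⊔ b) = c a ⊓ c b)
    (hdm2 : ∀ a b : T, c (a ⊓ b) = c a ⊔ c b)
    (P : ARP.Program U T) (BI BR : ARP.Val U T)
    (hmod : ARP.isModel P BI) (h : ARP.JRev c P BI BR) :
    BR ≤ BI := by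
  have hC : ARP.NC (ARP.reduct P BR BI) ≤ BI :=
    sInf_le (tpb_reduct_le P BI BR hmod)
  rw [ARP.JRev] at h
  rw [h]
  exact sup_le inf_le_left hC
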